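/- arXiv:1607.04395 — 4 statements merged into one kernel-verified Lean document; each statement's English description precedes it below -/
import Mathlib

section
/- Let a0,c0,α0,β0,a1,c1,α1,β1 be positive reals with c0 > a0, a1 > c1, a1 > a0. Set R = (β0 α1)/(α0 β1), A = (a1−a0)(R−1), B = (2a0−c0−a1)R + (c1−a0), C = (c0−a0)R. Let ᾱ be the root of the affine function g(u) = ((β1/α1)(1 − c1/a1) − (β0/α0)(1 − c0/a0))u + (β0/α0)(1 − c0/a0), i.e. the unique ᾱ with (a0 a1 − c1 a0 − R a1 a0 + R a1 c0)·ᾱ + R a1 (a0 − c0) = 0. If a := (β1/α1)·c1·a0 − (β0/α0)·c0·a1 < 0, then A ᾱ² + B ᾱ + C < 0. -/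
theorem stmt4 (a0 c0 α0 β0 a1 c1 α1 β1 : ℝ)
    (ha0 : 0 < a0) (hc0 : 0 < c0) (hα0 : 0 < α0) (hβ0 : 0 < β0)
    (ha1 : 0 < a1) (hc1 : 0 < c1) (hα1 : 0 < α1) (hβ1 : 0 < β1)
    (h0 : c0 > a0) (h1 : a1 > c1) (h01 : a1 > a0)
    (R A B C : ℝ)
    (hR : R = (β0 * α1) / (α0 * β1))
    (hA : A = (a1 - a0) * (R - 1))
    (hB : B = (2 * a0 - c0 - a1) * R + (c1 - a0))
    (hC : C = (c0 - a0) * R)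
    (ab : ℝ)
    (hab : (a0 * a1 - c1 * a0 - R * a1 * a0 + R * a1 * c0) * ab + R * a1 * (a0 - c0) = 0)
    (ha : β1 / α1 * c1 * a0 - β0 / α0 * c0 * a1 < 0) :
    A * ab ^ 2 + B * ab + C < 0 := by
  have hR0 : 0 < R := by
    rw [hR]; positivity
  have hneg : c1 * a0 - R * c0 * a1 < 0 := by
    have h : (c1 * a0 - R * c0 * a1) * (β1 / α1) =
        β1 / α1 * c1 * a0 - β0 / α0 * c0 * a1 := by
      rw [hR]; field_simp
    have hb : 0 < β1 / α1 := by positivity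
    nlinarith [h, ha]
  set D : ℝ := a0 * a1 - c1 * a0 - R * a1 * a0 + R * a1 * c0 with hD
  have hDpos : 0 < D := by
    have : D = a0 * (a1 - c1) + R * a1 * (c0 - a0) := by rw [hD]; ring
    rw [this]
    have := mul_pos ha0 (sub_pos.mpr h1)
    have := mul_pos (mul_pos hR0 ha1) (sub_pos.mpr h0)
    linarith
  set N : ℝ := R * a1 * (c0 - a0) with hN
  have habN : D * ab - N = 0 := by linear_combination hab
  have key : (A * ab ^ 2 + B * ab + C) * D ^ 2 =
      (a1 - c1) * (R * (c0 - a0) * ((a1 - a0) * (c1 * a0 - R * c0 * a1))) := by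
    rw [hA, hB, hC]
    linear_combination (((a1 - a0) * (R - 1)) * (D * ab + N) +
      ((2 * a0 - c0 - a1) * R + (c1 - a0)) * D) * habN
  have hrhs : (a1 - c1) * (R * (c0 - a0) * ((a1 - a0) * (c1 * a0 - R * c0 * a1))) < 0 := by
    have h1' : 0 < a1 - c1 := sub_pos.mpr h1
    have h2' : 0 < R * (c0 - a0) := mul_pos hR0 (sub_pos.mpr h0)
    have h3' : (a1 - a0) * (c1 * a0 - R * c0 * a1) < 0 :=
      mul_neg_of_pos_of_neg (sub_pos.mpr h01) hneg
    exact mul_neg_of_pos_of_neg h1' (mul_neg_of_pos_of_neg h2' h3')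
  nlinarith [key, hrhs, mul_pos hDpos hDpos, sq_nonneg D]
end

section
/- Under the hypotheses of the previous statement, assume additionally that for each v > 0, u ↦ Λ(u,v) is concave on (0,1), and that Λ(u,v) > 0 for all u ∈ (ᾱ, 1) and v > 0. Then the zero-crossing function v_y is strictly decreasing on (α, ᾱ). -/
open Set

theorem stmt9 (Λ : ℝ → ℝ → ℝ) (α ab : ℝ)
    (hα : 0 < α) (hαab : α < ab) (hab : ab < 1)
    (hcont : ContinuousOn (fun p : ℝ × ℝ => Λ p.1 p.2) (Ioo (0:ℝ) 1 ×ˢ Ioi (0:ℝ)))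
    (hmono : ∀ u ∈ Ioo (0:ℝ) 1, StrictMonoOn (Λ u) (Ioi (0:ℝ)))
    (hconc : ∀ v ∈ Ioi (0:ℝ), ConcaveOn ℝ (Ioo (0:ℝ) 1) (fun u => Λ u v))
    (hpos : ∀ u ∈ Ioo ab 1, ∀ v ∈ Ioi (0:ℝ), Λ u v > 0)
    (vy : ℝ → ℝ)
    (hvy : ∀ u ∈ Ioo α ab, 0 < vy u ∧ Λ u (vy u) = 0) :
    StrictAntiOn vy (Ioo α ab) := by
  intro x hx y hy hxy
  obtain ⟨hvx, hΛx⟩ := hvy x hx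
  obtain ⟨hvyy, hΛy⟩ := hvy y hy
  set v := vy x with hv
  set δ3 := (ab + 1) / 2 with hδ3def
  have hδ3 : δ3 ∈ Ioo ab 1 := ⟨by simp only [hδ3def]; linarith, by simp only [hδ3def]; linarith⟩
  have hx01 : x ∈ Ioo (0:ℝ) 1 := ⟨by linarith [hx.1, hx.2], by linarith [hx.2]⟩
  have hy01 : y ∈ Ioo (0:ℝ) 1 := ⟨by linarith [hy.1], by linarith [hy.2]⟩
  have hδ301 : δ3 ∈ Ioo (0:ℝ) 1 := ⟨by linarith [hδ3.1], hδ3.2⟩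
  have hvpos : v ∈ Ioi (0:ℝ) := hvx
  have hpos3 : 0 < Λ δ3 v := hpos δ3 hδ3 v hvpos
  have hxδ3 : x < δ3 := lt_trans (lt_trans hxy hy.2) hδ3.1
  have hyδ3 : y < δ3 := lt_trans hy.2 hδ3.1
  set t := (δ3 - y) / (δ3 - x) with htdef
  have hd : 0 < δ3 - x := by linarith
  have ht0 : 0 < t := div_pos (by linarith) hd
  have ht1 : t < 1 := by rw [htdef, div_lt_one hd]; linarith
  have hcancel : t * (δ3 - x) = δ3 - y := div_mul_cancel₀ _ (ne_of_gt hd)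
  have hcomb : t • x + (1 - t) • δ3 = y := by
    simp only [smul_eq_mul]; nlinarith [hcancel]
  have hcc := (hconc v hvpos).2 hx01 hδ301 ht0.le (by linarith : (0:ℝ) ≤ 1 - t)
    (by ring : t + (1 - t) = 1)
  rw [hcomb] at hcc
  have hΛyv : 0 < Λ y v := by
    have : t • Λ x v + (1 - t) • Λ δ3 v = (1 - t) * Λ δ3 v := by
      rw [hΛx]; simp [smul_eq_mul]
    rw [this] at hcc
    have : 0 < (1 - t) * Λ δ3 v := mul_pos (by linarith) hpos3
    linarith
  by_contra h
  push_neg at h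
  have := (hmono y hy01).monotoneOn hvpos (mem_Ioi.mpr hvyy) h
  rw [hΛy] at this
  linarith
end

section
/- Let a0,b0,c0,d0 and a1,b1,c1,d1 be positive with a0 < c0, b0 < d0 (environment 0 of Type 1) and a1 > c1, b1 > d1 (environment 1 of Type 2), and α0,α1,β0,β1 > 0. Then the set Ĩ = { u ∈ [0,1] : T(u) < 0 } (with T(u) = A u² + B u + C, R, A, B, C as usual) is nonempty; in fact Ĩ = (α, 1] for some α ∈ (0,1). -/
open Set

theorem stmt12 (a0 b0 c0 d0 α0 β0 a1 b1 c1 d1 α1 β1 : ℝ)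
    (ha0 : 0 < a0) (hb0 : 0 < b0) (hc0 : 0 < c0) (hd0 : 0 < d0)
    (hα0 : 0 < α0) (hβ0 : 0 < β0)
    (ha1 : 0 < a1) (hb1 : 0 < b1) (hc1 : 0 < c1) (hd1 : 0 < d1)
    (hα1 : 0 < α1) (hβ1 : 0 < β1)
    (hT1a : a0 < c0) (hT1b : b0 < d0) (hT2a : a1 > c1) (hT2b : b1 > d1)
    (R A B C : ℝ)
    (hR : R = (β0 * α1) / (α0 * β1))
    (hA : A = (a1 - a0) * (R - 1))
    (hB : B = (2 * a0 - c0 - a1) * R + (c1 - a0))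
    (hC : C = (c0 - a0) * R)
    (T : ℝ → ℝ) (hT : ∀ u, T u = A * u ^ 2 + B * u + C) :
    ∃ α ∈ Ioo (0:ℝ) 1, {u ∈ Icc (0:ℝ) 1 | T u < 0} = Ioc α 1 := by
  have hRpos : 0 < R := by rw [hR]; positivity
  have hT0 : 0 < T 0 := by
    rw [hT]
    simpa [hC] using mul_pos (sub_pos.2 hT1a) hRpos
  have hT1 : T 1 < 0 := by
    have : T 1 = c1 - a1 := by rw [hT, hA, hB, hC]; ring
    rw [this]; linarith
  have hTc : Continuous T := by
    have hfun : T = fun u => A * u ^ 2 + B * u + C := funext hT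
    rw [hfun]; continuity
  have hiv : (0:ℝ) ∈ T '' Ioo 0 1 := by
    apply intermediate_value_Ioo' (by norm_num : (0:ℝ) ≤ 1) hTc.continuousOn
    exact ⟨hT1, hT0⟩
  obtain ⟨α, hαmem, hαroot⟩ := hiv
  have hα0' : 0 < α := hαmem.1
  have hα1' : α < 1 := hαmem.2
  have hroot : A * α ^ 2 + B * α + C = 0 := by rw [← hT]; exact hαroot
  have hfact : ∀ u, T u = (u - α) * (A * (u + α) + B) := by
    intro u; rw [hT]; linear_combination hroot
  have hL0 : A * (0 + α) + B < 0 := by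
    have h := hT0; rw [hfact 0] at h
    rcases mul_pos_iff.1 h with ⟨h1, h2⟩ | ⟨h1, h2⟩
    · linarith
    · exact h2
  have hL1 : A * (1 + α) + B < 0 := by
    have h := hT1; rw [hfact 1] at h
    rcases mul_neg_iff.1 h with ⟨h1, h2⟩ | ⟨h1, h2⟩
    · exact h2
    · linarith
  have hL : ∀ u : ℝ, 0 ≤ u → u ≤ 1 → A * (u + α) + B < 0 := by
    intro u h0 h1
    have e : A * (u + α) + B = A * u + (A * (0 + α) + B) := by ring
    have e1 : A * (1 + α) + B = A * 1 + (A * (0 + α) + B) := by ring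
    rcases le_total A 0 with h | h
    · have hAu : A * u ≤ 0 := mul_nonpos_of_nonpos_of_nonneg h h0
      rw [e]; linarith
    · have hAu : A * u ≤ A * 1 := mul_le_mul_of_nonneg_left h1 h
      rw [e]; linarith
  refine ⟨α, ⟨hα0', hα1'⟩, ?_⟩
  ext u
  simp only [mem_setOf_eq, mem_Icc, mem_Ioc]
  constructor
  · rintro ⟨⟨h0u, hu1⟩, hTu⟩
    refine ⟨?_, hu1⟩
    by_contra h
    push_neg at h
    have hLu := hL u h0u hu1
    rw [hfact u] at hTu
    have hnn : 0 ≤ (α - u) * (-(A * (u + α) + B)) :=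
      mul_nonneg (by linarith) (by linarith)
    have e : (α - u) * (-(A * (u + α) + B)) = (u - α) * (A * (u + α) + B) := by ring
    rw [e] at hnn; linarith
  · rintro ⟨hαu, hu1⟩
    have h0u : 0 ≤ u := le_of_lt (lt_trans hα0' hαu)
    refine ⟨⟨h0u, hu1⟩, ?_⟩
    rw [hfact u]
    exact mul_neg_of_pos_of_neg (by linarith) (hL u h0u hu1)
end

section
/- For positive reals a0,a1,c0,c1,α0,α1,β0,β1 with notation R = (β0 α1)/(α0 β1), A = (a1−a0)(R−1), B = (2a0−c0−a1)R + (c1−a0), C = (c0−a0)R: for every s ∈ (0,1), setting α_s = s α1 + (1−s) α0, β_s = s β1 + (1−s) β0, a_s = (s α1 a1 + (1−s) α0 a0)/α_s, c_s = (s β1 c1 + (1−s) β0 c0)/β_s, and u = s α1/α_s, one has c_s − a_s = (A u² + B u + C)/(R(1−u) + u), up to the positive factor; in particular c_s − a_s and A u² + B u + C have the same sign. -/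
theorem stmt13 (a0 a1 c0 c1 α0 α1 β0 β1 : ℝ)
    (ha0 : 0 < a0) (ha1 : 0 < a1) (hc0 : 0 < c0) (hc1 : 0 < c1)
    (hα0 : 0 < α0) (hα1 : 0 < α1) (hβ0 : 0 < β0) (hβ1 : 0 < β1)
    (R A B C : ℝ)
    (hR : R = (β0 * α1) / (α0 * β1))
    (hA : A = (a1 - a0) * (R - 1))
    (hB : B = (2 * a0 - c0 - a1) * R + (c1 - a0))
    (hC : C = (c0 - a0) * R)
    (s : ℝ) (hs : s ∈ Set.Ioo (0:ℝ) 1)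
    (αs βs as cs u : ℝ)
    (hαs : αs = s * α1 + (1 - s) * α0)
    (hβs : βs = s * β1 + (1 - s) * β0)
    (has : as = (s * α1 * a1 + (1 - s) * α0 * a0) / αs)
    (hcs : cs = (s * β1 * c1 + (1 - s) * β0 * c0) / βs)
    (hu : u = s * α1 / αs) :
    cs - as = (A * u ^ 2 + B * u + C) / (R * (1 - u) + u) ∧
      (0 < cs - as ↔ 0 < A * u ^ 2 + B * u + C) := by
  obtain ⟨hs0, hs1⟩ := hs
  subst hu hcs has hβs hαs hR hA hB hC
  set αs := s * α1 + (1 - s) * α0 with hαs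
  set βs := s * β1 + (1 - s) * β0 with hβs
  have hαs' : 0 < αs := add_pos (mul_pos hs0 hα1) (mul_pos (by linarith) hα0)
  have hβs' : 0 < βs := add_pos (mul_pos hs0 hβ1) (mul_pos (by linarith) hβ0)
  set u := s * α1 / αs with hu
  set R := β0 * α1 / (α0 * β1) with hR
  set as := (s * α1 * a1 + (1 - s) * α0 * a0) / αs with has
  set cs := (s * β1 * c1 + (1 - s) * β0 * c0) / βs with hcs
  have hden : R * (1 - u) + u = α1 * βs / (β1 * αs) := by
    rw [hR, hu, hαs, hβs]
    field_simp
    ring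
  have hdenpos : 0 < R * (1 - u) + u := by
    rw [hden]; positivity
  have key : cs - as = ((a1 - a0) * (R - 1) * u ^ 2 + ((2 * a0 - c0 - a1) * R + (c1 - a0)) * u + (c0 - a0) * R) / (R * (1 - u) + u) := by
    rw [hden, has, hcs, hR, hu, hαs, hβs]
    field_simp
    ring
  refine ⟨key, ?_⟩
  rw [key]
  constructor
  · intro h
    exact (div_pos_iff.mp h).resolve_right (fun h' => absurd hdenpos (by linarith [h'.2])) |>.1
  · intro h
    exact div_pos h hdenpos
end
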